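/- arXiv:1908.09857 — 2 statements merged into one kernel-verified Lean document; each statement's English description precedes it below -/
import Mathlib

section
/- Suppose that the NBDSA principle holds, and let t ∈ [0,T). If c_t is an F_t-measurable random variable such that D(t,T)·1_{{t<τ}} = c_t·1_{{t<τ}} P-a.s., then 0 < c_t < 1 P-a.s. -/
open MeasureTheory

/-- The enlarged filtration `G_t := σ(F_t ∪ I_t)`, where
`I_t := σ({τ ≤ u} : u ∈ [0,t])`. -/
def enlarge {Ω : Type*} (F : ℝ → MeasurableSpace Ω) (τ : Ω → ℝ) (t : ℝ) :
    MeasurableSpace Ω :=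
  F t ⊔ MeasurableSpace.generateFrom {A | ∃ u : ℝ, 0 ≤ u ∧ u ≤ t ∧ A = {ω | τ ω ≤ u}}

/-- The value process `V_ψ(t) = ψ^B(t)B(t,T) + ψ^D(t)D(t,T)`, with
`B(t,T) = e^{-r(T-t)}`. -/
noncomputable def BDvalue {Ω : Type*} (r T : ℝ) (D : ℝ → Ω → ℝ) (ψB ψD : ℝ → Ω → ℝ)
    (t : ℝ) (ω : Ω) : ℝ :=
  ψB t ω * Real.exp (-(r * (T - t))) + ψD t ω * D t ω

/-- `ψ = (ψB, ψD)` is a `BD`-simple self-financing strategy. -/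
def IsBDSimpleSelfFinancing {Ω : Type*} [MeasurableSpace Ω] (P : Measure Ω)
    (F : ℝ → MeasurableSpace Ω) (τ : Ω → ℝ) (D : ℝ → Ω → ℝ) (r T : ℝ)
    (ψB ψD : ℝ → Ω → ℝ) : Prop :=
  (∀ t ∈ Set.Icc (0 : ℝ) T,
    Measurable[enlarge F τ t] (ψB t) ∧ Measurable[enlarge F τ t] (ψD t)) ∧
  ∃ (N : ℕ) (s : ℕ → ℝ) (x y : ℕ → Ω → ℝ),
    0 < N ∧ s 0 = 0 ∧ s N = T ∧
    (∀ n, n < N → s n < s (n + 1)) ∧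
    (∀ n, 1 ≤ n → n ≤ N → Measurable[enlarge F τ (s (n - 1))] (x n) ∧
      Measurable[enlarge F τ (s (n - 1))] (y n)) ∧
    (∀ n, 1 ≤ n → n ≤ N → ∀ t ∈ Set.Ioc (s (n - 1)) (s n), ψB t = x n ∧ ψD t = y n) ∧
    (∀ n, n < N → ∀ᵐ ω ∂P,
      Filter.Tendsto (fun t => BDvalue r T D ψB ψD t ω)
        (nhdsWithin (s n) (Set.Ioi (s n))) (nhds (BDvalue r T D ψB ψD (s n) ω)))

/-- The no-`BD`-simple-arbitrage (NBDSA) principle. -/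
def NBDSA {Ω : Type*} [MeasurableSpace Ω] (P : Measure Ω)
    (F : ℝ → MeasurableSpace Ω) (τ : Ω → ℝ) (D : ℝ → Ω → ℝ) (r T : ℝ) : Prop :=
  ¬ ∃ ψB ψD : ℝ → Ω → ℝ, IsBDSimpleSelfFinancing P F τ D r T ψB ψD ∧
    (∀ᵐ ω ∂P, BDvalue r T D ψB ψD 0 ω = 0) ∧
    (∀ᵐ ω ∂P, 0 ≤ BDvalue r T D ψB ψD T ω) ∧
    0 < P {ω | 0 < BDvalue r T D ψB ψD T ω}


lemma enlarge_mono {Ω : Type*} {F : ℝ → MeasurableSpace Ω} {τ : Ω → ℝ} {T u v : ℝ}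
    (hF_mono : ∀ s t : ℝ, 0 ≤ s → s ≤ t → t ≤ T → F s ≤ F t)
    (h0 : 0 ≤ u) (huv : u ≤ v) (hvT : v ≤ T) :
    enlarge F τ u ≤ enlarge F τ v := by
  refine sup_le (le_trans (hF_mono u v h0 huv hvT) le_sup_left)
    (le_trans (MeasurableSpace.generateFrom_mono ?_) le_sup_right)
  rintro A ⟨w, hw0, hwu, rfl⟩
  exact ⟨w, hw0, hwu.trans huv, rfl⟩

lemma meas_lt_tau {Ω : Type*} (F : ℝ → MeasurableSpace Ω) (τ : Ω → ℝ) {t : ℝ}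
    (ht : 0 ≤ t) : MeasurableSet[enlarge F τ t] {ω | t < τ ω} := by
  have h1 : MeasurableSet[enlarge F τ t] {ω | τ ω ≤ t} :=
    (le_sup_right : MeasurableSpace.generateFrom _ ≤ enlarge F τ t) _
      (MeasurableSpace.measurableSet_generateFrom ⟨t, ht, le_rfl, rfl⟩)
  have : {ω | t < τ ω} = {ω | τ ω ≤ t}ᶜ := by ext ω; simp [not_le]
  rw [this]; exact h1.compl

lemma mem_nhdsWithin_Ioi_of {p T c : ℝ} (hp0 : 0 ≤ p) (hpT : p < T) (hpc : p < c) :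
    Set.Icc 0 T ∩ Set.Iio c ∈ nhdsWithin p (Set.Ioi p) := by
  have hsub : Set.Ioo p (min T c) ⊆ Set.Icc 0 T ∩ Set.Iio c := fun u hu =>
    ⟨⟨hp0.trans hu.1.le, (hu.2.trans_le (min_le_left _ _)).le⟩,
      hu.2.trans_le (min_le_right _ _)⟩
  exact Filter.mem_of_superset (Ioo_mem_nhdsGT_of_mem ⟨le_rfl, lt_min hpT hpc⟩) hsub

lemma pos_inter {Ω : Type*} [mΩ : MeasurableSpace Ω] (P : Measure Ω)
    [IsProbabilityMeasure P] (F : ℝ → MeasurableSpace Ω) (T : ℝ) (hFT : F T ≤ mΩ)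
    (τ : Ω → ℝ) (hτ_meas : Measurable τ)
    (hτ_cond : ∀ s t : ℝ, 0 ≤ s → s < t →
      ∀ᵐ ω ∂P, 0 < (P[Set.indicator {ω | s < τ ω ∧ τ ω ≤ t}
        (fun _ => (1 : ℝ)) | F T]) ω)
    (A : Set Ω) (hA : MeasurableSet[F T] A) (hPA : 0 < P A)
    (a b : ℝ) (ha : 0 ≤ a) (hab : a < b) :
    0 < P (A ∩ {ω | a < τ ω ∧ τ ω ≤ b}) := by
  set S : Set Ω := {ω | a < τ ω ∧ τ ω ≤ b} with hS
  have hSmeas : MeasurableSet S := by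
    have : S = τ ⁻¹' (Set.Ioc a b) := rfl
    rw [this]; exact hτ_meas measurableSet_Ioc
  set f : Ω → ℝ := Set.indicator S (fun _ => (1:ℝ)) with hf
  have hf_int : Integrable f P := (integrable_const (1:ℝ)).indicator hSmeas
  set Z : Ω → ℝ := P[f | F T] with hZ
  have hZpos : ∀ᵐ ω ∂P, 0 < Z ω := hτ_cond a b ha hab
  rw [pos_iff_ne_zero]
  intro h0
  have hint : ∫ ω in A, Z ω ∂P = ∫ ω in A, f ω ∂P := setIntegral_condExp hFT hf_int hA
  have hfA : ∫ ω in A, f ω ∂P = 0 := by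
    rw [hf, setIntegral_indicator hSmeas, setIntegral_const, measureReal_def, h0]
    simp
  have hZA : ∫ ω in A, Z ω ∂P = 0 := by rw [hint, hfA]
  have hres : ∀ᵐ ω ∂(P.restrict A), 0 < Z ω := ae_restrict_of_ae hZpos
  have hZ0 : Z =ᵐ[P.restrict A] 0 := by
    rw [← integral_eq_zero_iff_of_nonneg_ae (hres.mono fun ω h => le_of_lt h)
      (integrable_condExp.restrict (s := A))] at *
    exact hZA
  have hfalse : ∀ᵐ ω ∂(P.restrict A), False := by
    filter_upwards [hres, hZ0] with ω h1 h2
    rw [Pi.zero_apply] at h2; exact absurd h2 (ne_of_gt h1)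
  have huniv : P.restrict A Set.univ = 0 := by simpa using hfalse
  rw [Measure.restrict_apply_univ] at huniv
  exact absurd huniv (ne_of_gt hPA)

lemma key {Ω : Type*} [mΩ : MeasurableSpace Ω] (P : Measure Ω)
    [IsProbabilityMeasure P] (T r : ℝ) (hT : 0 < T) (hr : 0 ≤ r)
    (F : ℝ → MeasurableSpace Ω)
    (hF_mono : ∀ s t : ℝ, 0 ≤ s → s ≤ t → t ≤ T → F s ≤ F t)
    (hF_le : ∀ t ∈ Set.Icc (0 : ℝ) T, F t ≤ mΩ)
    (τ : Ω → ℝ) (hτ_pos : ∀ ω, 0 < τ ω) (hτ_meas : Measurable τ)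
    (hτ_cond : ∀ s t : ℝ, 0 ≤ s → s < t →
      ∀ᵐ ω ∂P, 0 < (P[Set.indicator {ω | s < τ ω ∧ τ ω ≤ t}
        (fun _ => (1 : ℝ)) | F T]) ω)
    (D : ℝ → Ω → ℝ)
    (hD_T : ∀ ω, D T ω = Set.indicator {ω' | T < τ ω'} (fun _ => (1 : ℝ)) ω)
    (hD_cont : ∀ ω, ContinuousOn (fun t => D t ω) (Set.Icc 0 T ∩ Set.Iio (τ ω)))
    (hD_rc : ∀ ω, ∀ t ∈ Set.Icc (0 : ℝ) T, τ ω ≤ t →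
      ContinuousWithinAt (fun t => D t ω) (Set.Ici t) t)
    (hNBDSA : NBDSA P F τ D r T)
    (t : ℝ) (ht : t ∈ Set.Ico (0 : ℝ) T)
    (ct : Ω → ℝ) (hct_meas : Measurable[F t] ct)
    (hct : ∀ᵐ ω ∂P, D t ω * Set.indicator {ω' | t < τ ω'} (fun _ => (1 : ℝ)) ω =
      ct ω * Set.indicator {ω' | t < τ ω'} (fun _ => (1 : ℝ)) ω)
    (σ : ℝ) (A : Set Ω) (hA : MeasurableSet[F t] A) (hPA : 0 < P A)
    (a b : ℝ) (hta : t ≤ a) (hab : a < b)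
    (hgood0 : ∀ ω ∈ A, 0 ≤ σ * (0 - ct ω * Real.exp (r * (T - t))))
    (hgood1 : ∀ ω ∈ A, 0 ≤ σ * (1 - ct ω * Real.exp (r * (T - t))))
    (hstrict : ∀ ω ∈ A, a < τ ω → τ ω ≤ b →
      0 < σ * ((if T < τ ω then (1:ℝ) else 0) - ct ω * Real.exp (r * (T - t)))) :
    False := by
  obtain ⟨ht0, htT⟩ := ht
  classical
  set E : ℝ := Real.exp (r * (T - t)) with hE
  set C : Set Ω := A ∩ {ω | t < τ ω} with hCdef
  have hCmeas : MeasurableSet[enlarge F τ t] C :=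
    ((le_sup_left : F t ≤ enlarge F τ t) _ hA).inter (meas_lt_tau F τ ht0)
  set xf : Ω → ℝ := C.indicator (fun ω => -(σ * (ct ω * E))) with hxfdef
  set yf : Ω → ℝ := C.indicator (fun _ => σ) with hyfdef
  have hxf_meas : Measurable[enlarge F τ t] xf := by
    refine Measurable.indicator ?_ hCmeas
    have h1 : Measurable[enlarge F τ t] ct := hct_meas.mono le_sup_left le_rfl
    have heq : (fun ω => -(σ * (ct ω * E))) = fun ω => ct ω * (-(σ * E)) := by
      funext ω; ring
    rw [heq]; exact h1.mul_const _
  have hyf_meas : Measurable[enlarge F τ t] yf :=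
    Measurable.indicator measurable_const hCmeas
  set ψB : ℝ → Ω → ℝ := fun u => if t < u ∧ u ≤ T then xf else fun _ => 0 with hψBdef
  set ψD : ℝ → Ω → ℝ := fun u => if t < u ∧ u ≤ T then yf else fun _ => 0 with hψDdef
  -- values off (t, T] vanish
  have hψoff : ∀ u : ℝ, ¬ (t < u ∧ u ≤ T) → ψB u = (fun _ => 0) ∧ ψD u = (fun _ => 0) :=
    fun u hu => ⟨if_neg hu, if_neg hu⟩
  have hψon : ∀ u : ℝ, t < u → u ≤ T → ψB u = xf ∧ ψD u = yf :=
    fun u h1 h2 => ⟨if_pos ⟨h1, h2⟩, if_pos ⟨h1, h2⟩⟩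
  have hV0 : ∀ ω, BDvalue r T D ψB ψD 0 ω = 0 := by
    intro ω
    have h := hψoff 0 (fun h => absurd h.1 (not_lt.2 ht0))
    simp [BDvalue, h.1, h.2]
  have hVT : ∀ ω, BDvalue r T D ψB ψD T ω =
      C.indicator (fun ω => σ * ((if T < τ ω then (1:ℝ) else 0) - ct ω * E)) ω := by
    intro ω
    have h := hψon T htT le_rfl
    have hind : D T ω = if T < τ ω then (1:ℝ) else 0 := by
      rw [hD_T ω, Set.indicator_apply]; rfl
    by_cases hω : ω ∈ C
    · simp only [BDvalue, h.1, h.2, hxfdef, hyfdef, Set.indicator_of_mem hω, hind,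
        sub_self, mul_zero, neg_zero, Real.exp_zero, mul_one]
      ring
    · simp [BDvalue, h.1, h.2, hxfdef, hyfdef, Set.indicator_of_notMem hω]
  have hVTnonneg : ∀ ω, 0 ≤ BDvalue r T D ψB ψD T ω := by
    intro ω
    rw [hVT ω]
    by_cases hω : ω ∈ C
    · rw [Set.indicator_of_mem hω]
      by_cases hτω : T < τ ω
      · rw [if_pos hτω]; exact hgood1 ω hω.1
      · rw [if_neg hτω]; exact hgood0 ω hω.1
    · rw [Set.indicator_of_notMem hω]
  have hsub : A ∩ {ω | a < τ ω ∧ τ ω ≤ b} ⊆ {ω | 0 < BDvalue r T D ψB ψD T ω} := by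
    rintro ω ⟨hωA, hωa, hωb⟩
    have hωC : ω ∈ C := ⟨hωA, lt_of_le_of_lt hta hωa⟩
    have := hstrict ω hωA hωa hωb
    simp only [Set.mem_setOf_eq]
    rw [hVT ω, Set.indicator_of_mem hωC]
    exact this
  have hpos : 0 < P {ω | 0 < BDvalue r T D ψB ψD T ω} :=
    lt_of_lt_of_le
      (pos_inter P F T (hF_le T ⟨hT.le, le_rfl⟩) τ hτ_meas hτ_cond A
        ((hF_mono t T ht0 htT.le le_rfl) _ hA) hPA a b (ht0.trans hta) hab)
      (measure_mono hsub)
  -- the break points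
  set m : ℝ := if t = 0 then T / 2 else t with hmdef
  have hm0 : 0 < m := by
    rw [hmdef]; split_ifs with h
    · linarith
    · exact lt_of_le_of_ne ht0 (Ne.symm h)
  have hmT : m < T := by
    rw [hmdef]; split_ifs with h
    · linarith
    · exact htT
  have htm : t ≤ m := by
    rw [hmdef]; split_ifs with h
    · rw [h]; linarith
    · exact le_rfl
  set s : ℕ → ℝ := fun n => if n = 0 then 0 else if n = 1 then m else T with hsdef
  set x : ℕ → Ω → ℝ :=
    fun n => if n = 1 ∧ 0 < t then (fun _ => (0:ℝ)) else xf with hxdef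
  set y : ℕ → Ω → ℝ :=
    fun n => if n = 1 ∧ 0 < t then (fun _ => (0:ℝ)) else yf with hydef
  have hs0 : s 0 = 0 := by simp [hsdef]
  have hs1 : s 1 = m := by simp [hsdef]
  have hs2 : s 2 = T := by simp [hsdef]
  -- measurability of the positions
  have hmeas : ∀ u ∈ Set.Icc (0 : ℝ) T,
      Measurable[enlarge F τ u] (ψB u) ∧ Measurable[enlarge F τ u] (ψD u) := by
    intro u hu
    by_cases hcase : t < u ∧ u ≤ T
    · have h := hψon u hcase.1 hcase.2
      rw [h.1, h.2]
      exact ⟨hxf_meas.mono (enlarge_mono hF_mono ht0 hcase.1.le hu.2) le_rfl,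
        hyf_meas.mono (enlarge_mono hF_mono ht0 hcase.1.le hu.2) le_rfl⟩
    · have h := hψoff u hcase
      rw [h.1, h.2]
      exact ⟨measurable_const, measurable_const⟩
  apply hNBDSA
  refine ⟨ψB, ψD, ⟨hmeas, 2, s, x, y, by norm_num, hs0, hs2, ?_, ?_, ?_, ?_⟩,
    Filter.Eventually.of_forall hV0, Filter.Eventually.of_forall hVTnonneg, hpos⟩
  · -- monotonicity of s
    intro n hn
    interval_cases n
    · rw [hs0, hs1]; exact hm0
    · rw [hs1, hs2]; exact hmT
  · -- measurability of x n, y n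
    have hx1pos : 0 < t → (x 1 = fun _ => (0:ℝ)) ∧ (y 1 = fun _ => (0:ℝ)) := by
      intro hp; constructor <;> simp [hxdef, hydef, hp]
    have hx1zero : ¬ 0 < t → x 1 = xf ∧ y 1 = yf := by
      intro hp; constructor <;> simp [hxdef, hydef, hp]
    have hx2 : x 2 = xf ∧ y 2 = yf := by
      constructor <;> simp [hxdef, hydef]
    intro n h1 h2
    interval_cases n
    · show Measurable[enlarge F τ (s (1 - 1))] (x 1) ∧
        Measurable[enlarge F τ (s (1 - 1))] (y 1)
      have hsm : s (1 - 1) = 0 := hs0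
      rw [hsm]
      by_cases hp : 0 < t
      · rw [(hx1pos hp).1, (hx1pos hp).2]
        exact ⟨measurable_const, measurable_const⟩
      · have ht' : t = 0 := le_antisymm (not_lt.1 hp) ht0
        rw [(hx1zero hp).1, (hx1zero hp).2, ← ht']
        exact ⟨hxf_meas, hyf_meas⟩
    · show Measurable[enlarge F τ (s (2 - 1))] (x 2) ∧
        Measurable[enlarge F τ (s (2 - 1))] (y 2)
      have hsm : s (2 - 1) = m := hs1
      rw [hsm, hx2.1, hx2.2]
      exact ⟨hxf_meas.mono (enlarge_mono hF_mono ht0 htm hmT.le) le_rfl,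
        hyf_meas.mono (enlarge_mono hF_mono ht0 htm hmT.le) le_rfl⟩
  · -- holdings equal positions
    have hx1pos : 0 < t → (x 1 = fun _ => (0:ℝ)) ∧ (y 1 = fun _ => (0:ℝ)) := by
      intro hp; constructor <;> simp [hxdef, hydef, hp]
    have hx1zero : ¬ 0 < t → x 1 = xf ∧ y 1 = yf := by
      intro hp; constructor <;> simp [hxdef, hydef, hp]
    have hx2 : x 2 = xf ∧ y 2 = yf := by
      constructor <;> simp [hxdef, hydef]
    intro n h1 h2 u hu
    interval_cases n
    · have hsm : s (1 - 1) = 0 := hs0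
      rw [hsm, hs1] at hu
      by_cases hp : 0 < t
      · have hmt : m = t := by rw [hmdef, if_neg (ne_of_gt hp)]
        have hnot : ¬ (t < u ∧ u ≤ T) := fun hc =>
          absurd (hc.1.trans_le hu.2) (by rw [hmt]; exact lt_irrefl t)
        have h := hψoff u hnot
        rw [h.1, h.2, (hx1pos hp).1, (hx1pos hp).2]
        exact ⟨rfl, rfl⟩
      · have ht' : t = 0 := le_antisymm (not_lt.1 hp) ht0
        have h := hψon u (by rw [ht']; exact hu.1) (hu.2.trans hmT.le)
        rw [h.1, h.2, (hx1zero hp).1, (hx1zero hp).2]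
        exact ⟨rfl, rfl⟩
    · have hsm : s (2 - 1) = m := hs1
      rw [hsm, hs2] at hu
      have h := hψon u (htm.trans_lt hu.1) hu.2
      rw [h.1, h.2, hx2.1, hx2.2]
      exact ⟨rfl, rfl⟩
  · -- self-financing: right-continuity of the value process
    intro n hn
    interval_cases n
    · -- at s 0 = 0
      rw [hs0]
      simp only [hV0]
      by_cases hp : 0 < t
      · refine Filter.Eventually.of_forall fun ω => ?_
        refine Filter.Tendsto.congr' ?_ tendsto_const_nhds
        filter_upwards [Ioc_mem_nhdsGT_of_mem (⟨le_rfl, hp⟩ : (0:ℝ) ∈ Set.Ico 0 t)]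
          with u hu
        have h := hψoff u (fun hc => absurd hu.2 (not_le.2 hc.1))
        simp [BDvalue, h.1, h.2]
      · have ht' : t = 0 := le_antisymm (not_lt.1 hp) ht0
        filter_upwards [hct] with ω hω
        have hτω : (0:ℝ) < τ ω := hτ_pos ω
        have hDc : Filter.Tendsto (fun u => D u ω) (nhdsWithin 0 (Set.Ioi 0))
            (nhds (D 0 ω)) :=
          ((hD_cont ω) 0 ⟨⟨le_rfl, hT.le⟩, hτω⟩).tendsto.mono_left
            (nhdsWithin_le_iff.2 (mem_nhdsWithin_Ioi_of le_rfl hT hτω))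
        have hexp : Filter.Tendsto (fun u : ℝ => Real.exp (-(r * (T - u))))
            (nhdsWithin 0 (Set.Ioi 0)) (nhds (Real.exp (-(r * (T - 0))))) := by
          have hcont : Continuous fun u : ℝ => Real.exp (-(r * (T - u))) := by fun_prop
          exact (hcont.tendsto 0).mono_left nhdsWithin_le_nhds
        have hlim := (hexp.const_mul (xf ω)).add (hDc.const_mul (yf ω))
        have hev : (fun u => xf ω * Real.exp (-(r * (T - u))) + yf ω * D u ω)
            =ᶠ[nhdsWithin 0 (Set.Ioi 0)] fun u => BDvalue r T D ψB ψD u ω := by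
          filter_upwards [Ioc_mem_nhdsGT_of_mem (⟨le_rfl, hT⟩ : (0:ℝ) ∈ Set.Ico 0 T)]
            with u hu
          have h := hψon u (by rw [ht']; exact hu.1) hu.2
          simp [BDvalue, h.1, h.2]
        have hzero : xf ω * Real.exp (-(r * (T - 0))) + yf ω * D 0 ω = 0 := by
          have hindm : ω ∈ {ω' | t < τ ω'} := by
            show t < τ ω; rw [ht']; exact hτω
          rw [Set.indicator_of_mem hindm, mul_one, mul_one] at hω
          have h0D : D 0 ω = ct ω := by rw [← ht']; exact hω
          by_cases hωC : ω ∈ C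
          · rw [hxfdef, hyfdef]
            simp only [Set.indicator_of_mem hωC]
            have hE0 : E = Real.exp (r * (T - 0)) := by rw [hE, ht']
            rw [h0D, hE0, Real.exp_neg]
            have hne := Real.exp_ne_zero (r * (T - 0))
            field_simp
            ring
          · rw [hxfdef, hyfdef]
            simp [Set.indicator_of_notMem hωC]
        have hfin := Filter.Tendsto.congr' hev hlim
        rwa [hzero] at hfin
    · -- at s 1 = m
      rw [hs1]
      by_cases hp : 0 < t
      · have hmt : m = t := by rw [hmdef, if_neg (ne_of_gt hp)]
        rw [hmt]
        have hVt : ∀ ω, BDvalue r T D ψB ψD t ω = 0 := by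
          intro ω
          have h := hψoff t (fun hc => lt_irrefl t hc.1)
          simp [BDvalue, h.1, h.2]
        simp only [hVt]
        filter_upwards [hct] with ω hω
        by_cases hτω : t < τ ω
        · have hDc : Filter.Tendsto (fun u => D u ω) (nhdsWithin t (Set.Ioi t))
              (nhds (D t ω)) :=
            ((hD_cont ω) t ⟨⟨ht0, htT.le⟩, hτω⟩).tendsto.mono_left
              (nhdsWithin_le_iff.2 (mem_nhdsWithin_Ioi_of ht0 htT hτω))
          have hexp : Filter.Tendsto (fun u : ℝ => Real.exp (-(r * (T - u))))
              (nhdsWithin t (Set.Ioi t)) (nhds (Real.exp (-(r * (T - t))))) := by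
            have hcont : Continuous fun u : ℝ => Real.exp (-(r * (T - u))) := by fun_prop
            exact (hcont.tendsto t).mono_left nhdsWithin_le_nhds
          have hlim := (hexp.const_mul (xf ω)).add (hDc.const_mul (yf ω))
          have hev : (fun u => xf ω * Real.exp (-(r * (T - u))) + yf ω * D u ω)
              =ᶠ[nhdsWithin t (Set.Ioi t)] fun u => BDvalue r T D ψB ψD u ω := by
            filter_upwards [Ioc_mem_nhdsGT_of_mem (⟨le_rfl, htT⟩ : t ∈ Set.Ico t T)]
              with u hu
            have h := hψon u hu.1 hu.2
            simp [BDvalue, h.1, h.2]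
          have hzero : xf ω * Real.exp (-(r * (T - t))) + yf ω * D t ω = 0 := by
            have hindm : ω ∈ {ω' | t < τ ω'} := hτω
            rw [Set.indicator_of_mem hindm, mul_one, mul_one] at hω
            by_cases hωC : ω ∈ C
            · rw [hxfdef, hyfdef]
              simp only [Set.indicator_of_mem hωC]
              rw [hω, hE, Real.exp_neg]
              have hne := Real.exp_ne_zero (r * (T - t))
              field_simp
              ring
            · rw [hxfdef, hyfdef]
              simp [Set.indicator_of_notMem hωC]
          have hfin := Filter.Tendsto.congr' hev hlim
          rwa [hzero] at hfin
        · have hx0 : xf ω = 0 := by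
            rw [hxfdef]; exact Set.indicator_of_notMem (fun hc => hτω hc.2) _
          have hy0 : yf ω = 0 := by
            rw [hyfdef]; exact Set.indicator_of_notMem (fun hc => hτω hc.2) _
          refine Filter.Tendsto.congr' ?_ tendsto_const_nhds
          filter_upwards [Ioc_mem_nhdsGT_of_mem (⟨le_rfl, htT⟩ : t ∈ Set.Ico t T)]
            with u hu
          have h := hψon u hu.1 hu.2
          simp [BDvalue, h.1, h.2, hx0, hy0]
      · have ht' : t = 0 := le_antisymm (not_lt.1 hp) ht0
        have hVm : ∀ ω, BDvalue r T D ψB ψD m ω =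
            xf ω * Real.exp (-(r * (T - m))) + yf ω * D m ω := by
          intro ω
          have h := hψon m (by rw [ht']; exact hm0) hmT.le
          simp [BDvalue, h.1, h.2]
        simp only [hVm]
        refine Filter.Eventually.of_forall fun ω => ?_
        have hDc : Filter.Tendsto (fun u => D u ω) (nhdsWithin m (Set.Ioi m))
            (nhds (D m ω)) := by
          by_cases hτm : τ ω ≤ m
          · exact (hD_rc ω m ⟨hm0.le, hmT.le⟩ hτm).tendsto.mono_left
              (nhdsWithin_mono m Set.Ioi_subset_Ici_self)
          · exact ((hD_cont ω) m ⟨⟨hm0.le, hmT.le⟩, not_le.1 hτm⟩).tendsto.mono_left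
              (nhdsWithin_le_iff.2 (mem_nhdsWithin_Ioi_of hm0.le hmT (not_le.1 hτm)))
        have hexp : Filter.Tendsto (fun u : ℝ => Real.exp (-(r * (T - u))))
            (nhdsWithin m (Set.Ioi m)) (nhds (Real.exp (-(r * (T - m))))) := by
          have hcont : Continuous fun u : ℝ => Real.exp (-(r * (T - u))) := by fun_prop
          exact (hcont.tendsto m).mono_left nhdsWithin_le_nhds
        have hlim := (hexp.const_mul (xf ω)).add (hDc.const_mul (yf ω))
        refine Filter.Tendsto.congr' ?_ hlim
        filter_upwards [Ioc_mem_nhdsGT_of_mem (⟨le_rfl, hmT⟩ : m ∈ Set.Ico m T)]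
          with u hu
        have h := hψon u (htm.trans_lt hu.1) hu.2
        simp [BDvalue, h.1, h.2]

/-- Suppose that the NBDSA principle holds, and let `t ∈ [0,T)`.  If `c_t`
is an `F_t`-measurable random variable such that `D(t,T)·1_{{t<τ}} = c_t·1_{{t<τ}}`
`P`-a.s., then `0 < c_t < 1` `P`-a.s. -/
theorem stmt17 {Ω : Type*} [mΩ : MeasurableSpace Ω] (P : Measure Ω)
    [IsProbabilityMeasure P] (T r : ℝ) (hT : 0 < T) (hr : 0 ≤ r)
    (F : ℝ → MeasurableSpace Ω)
    (hF_mono : ∀ s t : ℝ, 0 ≤ s → s ≤ t → t ≤ T → F s ≤ F t)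
    (hF_le : ∀ t ∈ Set.Icc (0 : ℝ) T, F t ≤ mΩ)
    (τ : Ω → ℝ) (hτ_pos : ∀ ω, 0 < τ ω) (hτ_meas : Measurable τ)
    (hτ_cond : ∀ s t : ℝ, 0 ≤ s → s < t →
      ∀ᵐ ω ∂P, 0 < (P[Set.indicator {ω | s < τ ω ∧ τ ω ≤ t}
        (fun _ => (1 : ℝ)) | F T]) ω)
    (D : ℝ → Ω → ℝ)
    (hD_adapted : ∀ t ∈ Set.Icc (0 : ℝ) T, Measurable[enlarge F τ t] (D t))
    (hD_T : ∀ ω, D T ω = Set.indicator {ω' | T < τ ω'} (fun _ => (1 : ℝ)) ω)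
    (hD_cont : ∀ ω, ContinuousOn (fun t => D t ω) (Set.Icc 0 T ∩ Set.Iio (τ ω)))
    (hD_rc : ∀ ω, ∀ t ∈ Set.Icc (0 : ℝ) T, τ ω ≤ t →
      ContinuousWithinAt (fun t => D t ω) (Set.Ici t) t)
    (hNBDSA : NBDSA P F τ D r T)
    (t : ℝ) (ht : t ∈ Set.Ico (0 : ℝ) T)
    (ct : Ω → ℝ) (hct_meas : Measurable[F t] ct)
    (hct : ∀ᵐ ω ∂P, D t ω * Set.indicator {ω' | t < τ ω'} (fun _ => (1 : ℝ)) ω =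
      ct ω * Set.indicator {ω' | t < τ ω'} (fun _ => (1 : ℝ)) ω) :
    ∀ᵐ ω ∂P, ct ω ∈ Set.Ioo (0 : ℝ) 1 := by
  have hE1 : 1 ≤ Real.exp (r * (T - t)) :=
    Real.one_le_exp (mul_nonneg hr (by linarith [ht.2]))
  have hEpos : 0 < Real.exp (r * (T - t)) := Real.exp_pos _
  have h0 : P {ω | ct ω ≤ 0} = 0 := by
    by_contra hne
    refine key P T r hT hr F hF_mono hF_le τ hτ_pos hτ_meas hτ_cond D hD_T hD_cont
      hD_rc hNBDSA t ht ct hct_meas hct 1 {ω | ct ω ≤ 0}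
      (hct_meas measurableSet_Iic) (pos_iff_ne_zero.2 hne) T (T + 1) ht.2.le
      (by linarith) ?_ ?_ ?_
    · intro ω hω
      simp only [Set.mem_setOf_eq] at hω
      nlinarith
    · intro ω hω
      simp only [Set.mem_setOf_eq] at hω
      nlinarith
    · intro ω hω h1 h2
      simp only [Set.mem_setOf_eq] at hω
      rw [if_pos h1]
      nlinarith
  have h1 : P {ω | 1 ≤ ct ω} = 0 := by
    by_contra hne
    refine key P T r hT hr F hF_mono hF_le τ hτ_pos hτ_meas hτ_cond D hD_T hD_cont
      hD_rc hNBDSA t ht ct hct_meas hct (-1) {ω | 1 ≤ ct ω}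
      (hct_meas measurableSet_Ici) (pos_iff_ne_zero.2 hne) t T le_rfl ht.2 ?_ ?_ ?_
    · intro ω hω
      simp only [Set.mem_setOf_eq] at hω
      nlinarith
    · intro ω hω
      simp only [Set.mem_setOf_eq] at hω
      nlinarith
    · intro ω hω ha hb
      simp only [Set.mem_setOf_eq] at hω
      rw [if_neg (not_lt.2 hb)]
      nlinarith
  rw [ae_iff]
  refine measure_mono_null ?_
    (le_antisymm ((measure_union_le {ω | ct ω ≤ 0} {ω | 1 ≤ ct ω}).trans
      (by rw [h0, h1]; simp)) zero_le)
  intro ω hω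
  simp only [Set.mem_setOf_eq, Set.mem_Ioo, not_and_or, not_lt] at hω
  rcases hω with h | h
  · exact Or.inl h
  · exact Or.inr h
end

section
/- If G₁ and G₂ are two strictly positive (F_t)-adapted processes on [0,T], each with all paths non-increasing and continuous, with G₁(0) = G₂(0) = 1, and such that both (c(t)G₁(t))_{t∈[0,T]} and (c(t)G₂(t))_{t∈[0,T]} are (F_t)-martingales under Q, then G₁ and G₂ are indistinguishable, i.e. Q-almost surely G₁(t) = G₂(t) for all t ∈ [0,T]. -/
open MeasureTheory

/-- `X` is an `(F_t)_{t∈[0,T]}`-martingale under `Q`. -/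
def MartingaleOn {Ω : Type*} [mΩ : MeasurableSpace Ω] (F : ℝ → MeasurableSpace Ω)
    (Q : Measure Ω) (X : ℝ → Ω → ℝ) (T : ℝ) : Prop :=
  (∀ t ∈ Set.Icc (0 : ℝ) T, Measurable[F t] (X t) ∧ Integrable (X t) Q) ∧
  ∀ s t : ℝ, 0 ≤ s → s ≤ t → t ≤ T → Q[X t | F s] =ᵐ[Q] X s

/-- Let `(Ω, Σ, Q)` be a probability space with a filtration
`(F_t)_{t∈[0,T]}`, `T > 0`, satisfying the usual conditions (right-continuous and
complete).  Let `c = (c(t))_{t∈[0,T]}` be an `(F_t)`-adapted process with continuous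
paths such that `c(t) ∈ (0,1)` for all `t ∈ [0,T)` and `c(T) = 1`.  If `G₁` and `G₂`
are two strictly positive `(F_t)`-adapted processes on `[0,T]`, each with all paths
non-increasing and continuous, with `G₁(0) = G₂(0) = 1`, and such that both
`(c(t)G₁(t))_{t∈[0,T]}` and `(c(t)G₂(t))_{t∈[0,T]}` are `(F_t)`-martingales under `Q`,
then `G₁` and `G₂` are indistinguishable: `Q`-almost surely `G₁(t) = G₂(t)` for all
`t ∈ [0,T]`. -/
theorem stmt19 {Ω : Type*} [mΩ : MeasurableSpace Ω] (Q : Measure Ω)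
    [IsProbabilityMeasure Q] (T : ℝ) (hT : 0 < T)
    (F : ℝ → MeasurableSpace Ω)
    (hF_mono : ∀ s t : ℝ, 0 ≤ s → s ≤ t → t ≤ T → F s ≤ F t)
    (hF_le : ∀ t ∈ Set.Icc (0 : ℝ) T, F t ≤ mΩ)
    (hF_rightCont : ∀ t : ℝ, 0 ≤ t → t < T → F t = ⨅ u ∈ Set.Ioc t T, F u)
    (hF_complete : ∀ t ∈ Set.Icc (0 : ℝ) T, ∀ A : Set Ω,
      MeasurableSet[mΩ] A → Q A = 0 → MeasurableSet[F t] A)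
    (c : ℝ → Ω → ℝ)
    (hc_adapted : ∀ t ∈ Set.Icc (0 : ℝ) T, Measurable[F t] (c t))
    (hc_cont : ∀ ω, ContinuousOn (fun t => c t ω) (Set.Icc (0 : ℝ) T))
    (hc_mem : ∀ t : ℝ, 0 ≤ t → t < T → ∀ ω, c t ω ∈ Set.Ioo (0 : ℝ) 1)
    (hc_T : ∀ ω, c T ω = 1)
    (G₁ G₂ : ℝ → Ω → ℝ)
    (hG₁_adapted : ∀ t ∈ Set.Icc (0 : ℝ) T, Measurable[F t] (G₁ t))
    (hG₂_adapted : ∀ t ∈ Set.Icc (0 : ℝ) T, Measurable[F t] (G₂ t))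
    (hG₁_pos : ∀ t ∈ Set.Icc (0 : ℝ) T, ∀ ω, 0 < G₁ t ω)
    (hG₂_pos : ∀ t ∈ Set.Icc (0 : ℝ) T, ∀ ω, 0 < G₂ t ω)
    (hG₁_anti : ∀ ω, AntitoneOn (fun t => G₁ t ω) (Set.Icc (0 : ℝ) T))
    (hG₂_anti : ∀ ω, AntitoneOn (fun t => G₂ t ω) (Set.Icc (0 : ℝ) T))
    (hG₁_cont : ∀ ω, ContinuousOn (fun t => G₁ t ω) (Set.Icc (0 : ℝ) T))
    (hG₂_cont : ∀ ω, ContinuousOn (fun t => G₂ t ω) (Set.Icc (0 : ℝ) T))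
    (hG₁_one : ∀ ω, G₁ 0 ω = 1) (hG₂_one : ∀ ω, G₂ 0 ω = 1)
    (hM₁ : MartingaleOn F Q (fun t ω => c t ω * G₁ t ω) T)
    (hM₂ : MartingaleOn F Q (fun t ω => c t ω * G₂ t ω) T) :
    ∀ᵐ ω ∂Q, ∀ t ∈ Set.Icc (0 : ℝ) T, G₁ t ω = G₂ t ω := by
  classical
  have hT0 : (0:ℝ) ∈ Set.Icc (0:ℝ) T := ⟨le_rfl, hT.le⟩
  -- pointwise bounds on c
  have hc01 : ∀ t ∈ Set.Icc (0:ℝ) T, ∀ ω, 0 < c t ω ∧ c t ω ≤ 1 := by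
    intro t ht ω
    rcases eq_or_lt_of_le ht.2 with h | h
    · subst h; rw [hc_T]; exact ⟨one_pos, le_rfl⟩
    · exact ⟨(hc_mem t ht.1 h ω).1, (hc_mem t ht.1 h ω).2.le⟩
  have hG₁01 : ∀ t ∈ Set.Icc (0:ℝ) T, ∀ ω, 0 < G₁ t ω ∧ G₁ t ω ≤ 1 := by
    intro t ht ω
    refine ⟨hG₁_pos t ht ω, ?_⟩
    have := hG₁_anti ω hT0 ht ht.1
    simpa [hG₁_one ω] using this
  have hG₂01 : ∀ t ∈ Set.Icc (0:ℝ) T, ∀ ω, 0 < G₂ t ω ∧ G₂ t ω ≤ 1 := by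
    intro t ht ω
    refine ⟨hG₂_pos t ht ω, ?_⟩
    have := hG₂_anti ω hT0 ht ht.1
    simpa [hG₂_one ω] using this
  -- measurability w.r.t. the ambient σ-algebra
  have hmc : ∀ t ∈ Set.Icc (0:ℝ) T, Measurable (c t) :=
    fun t ht => (hc_adapted t ht).mono (hF_le t ht) le_rfl
  have hmG₁ : ∀ t ∈ Set.Icc (0:ℝ) T, Measurable (G₁ t) :=
    fun t ht => (hG₁_adapted t ht).mono (hF_le t ht) le_rfl
  have hmG₂ : ∀ t ∈ Set.Icc (0:ℝ) T, Measurable (G₂ t) :=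
    fun t ht => (hG₂_adapted t ht).mono (hF_le t ht) le_rfl
  -- integrability of bounded measurable functions
  have hint : ∀ (f : Ω → ℝ) (C : ℝ), Measurable f → (∀ ω, |f ω| ≤ C) → Integrable f Q := by
    intro f C hf hC
    exact (integrable_const C).mono' hf.aestronglyMeasurable
      (Filter.Eventually.of_forall fun ω => by simpa [Real.norm_eq_abs] using hC ω)
  -- notation for the difference process
  set D : ℝ → Ω → ℝ := fun t ω => G₁ t ω - G₂ t ω with hDdef
  have hDb : ∀ t ∈ Set.Icc (0:ℝ) T, ∀ ω, |D t ω| ≤ 1 := by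
    intro t ht ω
    have h1 := hG₁01 t ht ω
    have h2 := hG₂01 t ht ω
    rw [abs_le]; constructor <;> simp only [hDdef] <;> nlinarith [h1.1, h1.2, h2.1, h2.2]
  have hmD : ∀ t ∈ Set.Icc (0:ℝ) T, Measurable (D t) :=
    fun t ht => (hmG₁ t ht).sub (hmG₂ t ht)
  -- pull-out formula for integrals against conditional expectations
  have pull : ∀ s ∈ Set.Icc (0:ℝ) T, ∀ (f g : Ω → ℝ), StronglyMeasurable[F s] f →
      Integrable (fun ω => f ω * g ω) Q → Integrable g Q →
      ∫ ω, f ω * g ω ∂Q = ∫ ω, f ω * (Q[g | F s]) ω ∂Q := by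
    intro s hs f g hf hfg hg
    have hm : F s ≤ mΩ := hF_le s hs
    have h1 : ∫ ω, (f * g) ω ∂Q = ∫ ω, (Q[f * g | F s]) ω ∂Q := (integral_condExp hm).symm
    have h2 : Q[f * g | F s] =ᵐ[Q] f * Q[g | F s] :=
      condExp_mul_of_stronglyMeasurable_left hf hfg hg
    calc ∫ ω, f ω * g ω ∂Q = ∫ ω, (Q[f * g | F s]) ω ∂Q := h1
      _ = ∫ ω, f ω * (Q[g | F s]) ω ∂Q := integral_congr_ae h2
  -- the difference martingale property
  have hmart : ∀ s u, 0 ≤ s → s ≤ u → u ≤ T →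
      Q[(fun ω => c u ω * D u ω) | F s] =ᵐ[Q] fun ω => c s ω * D s ω := by
    intro s u hs0 hsu huT
    have hu : u ∈ Set.Icc (0:ℝ) T := ⟨hs0.trans hsu, huT⟩
    have h1 := hM₁.2 s u hs0 hsu huT
    have h2 := hM₂.2 s u hs0 hsu huT
    have hI1 : Integrable (fun ω => c u ω * G₁ u ω) Q := (hM₁.1 u hu).2
    have hI2 : Integrable (fun ω => c u ω * G₂ u ω) Q := (hM₂.1 u hu).2
    have hsub : Q[(fun ω => c u ω * G₁ u ω) - (fun ω => c u ω * G₂ u ω) | F s]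
        =ᵐ[Q] Q[(fun ω => c u ω * G₁ u ω) | F s] - Q[(fun ω => c u ω * G₂ u ω) | F s] :=
      condExp_sub hI1 hI2 (F s)
    have heq : (fun ω => c u ω * D u ω)
        = (fun ω => c u ω * G₁ u ω) - (fun ω => c u ω * G₂ u ω) := by
      funext ω; simp only [hDdef, Pi.sub_apply]; ring
    rw [heq]
    refine hsub.trans ?_
    filter_upwards [h1, h2] with ω e1 e2
    simp only [Pi.sub_apply, e1, e2, hDdef]; ring
  -- c is a submartingale
  have hsubm : ∀ s u, 0 ≤ s → s ≤ u → u ≤ T →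
      ∀ᵐ ω ∂Q, c s ω ≤ (Q[c u | F s]) ω := by
    intro s u hs0 hsu huT
    have hs : s ∈ Set.Icc (0:ℝ) T := ⟨hs0, hsu.trans huT⟩
    have hu : u ∈ Set.Icc (0:ℝ) T := ⟨hs0.trans hsu, huT⟩
    have h1 := hM₁.2 s u hs0 hsu huT
    have hIu : Integrable (fun ω => c u ω * G₁ u ω) Q := (hM₁.1 u hu).2
    have hIcu : Integrable (c u) Q :=
      hint (c u) 1 (hmc u hu) (fun ω => by
        have := hc01 u hu ω; rw [abs_le]; constructor <;> linarith [this.1, this.2])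
    have hIus : Integrable (fun ω => G₁ s ω * c u ω) Q :=
      hint _ 1 ((hmG₁ s hs).mul (hmc u hu)) (fun ω => by
        have h1 := hG₁01 s hs ω; have h2 := hc01 u hu ω
        rw [abs_le]; constructor <;> nlinarith [h1.1, h1.2, h2.1, h2.2])
    have hle : (fun ω => c u ω * G₁ u ω) ≤ᵐ[Q] fun ω => G₁ s ω * c u ω := by
      refine Filter.Eventually.of_forall fun ω => ?_
      have hanti : G₁ u ω ≤ G₁ s ω := hG₁_anti ω hs hu hsu
      have hc := hc01 u hu ω
      show c u ω * G₁ u ω ≤ G₁ s ω * c u ω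
      rw [mul_comm (G₁ s ω)]
      exact mul_le_mul_of_nonneg_left hanti hc.1.le
    have hmono : Q[(fun ω => c u ω * G₁ u ω) | F s] ≤ᵐ[Q] Q[(fun ω => G₁ s ω * c u ω) | F s] :=
      condExp_mono hIu hIus hle
    have hpull : Q[(fun ω => G₁ s ω * c u ω) | F s] =ᵐ[Q] fun ω => G₁ s ω * (Q[c u | F s]) ω := by
      have := condExp_mul_of_stronglyMeasurable_left (m := F s) (μ := Q)
        (f := G₁ s) (g := c u) (hG₁_adapted s hs).stronglyMeasurable hIus hIcu
      exact this
    filter_upwards [h1, hmono, hpull] with ω e1 e2 e3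
    rw [e1] at e2
    rw [e3] at e2
    have hGpos := hG₁_pos s hs ω
    have := (mul_le_mul_iff_right₀ hGpos).mp (by linarith [e2] : G₁ s ω * c s ω ≤ G₁ s ω * (Q[c u | F s]) ω)
    exact this
  -- the key one-step inequality
  have key : ∀ s u, 0 ≤ s → s ≤ u → u ≤ T →
      ∫ ω, c u ω * (D u ω)^2 ∂Q ≤
        ∫ ω, c s ω * (D s ω)^2 ∂Q + ∫ ω, (D u ω - D s ω)^2 ∂Q := by
    intro s u hs0 hsu huT
    have hs : s ∈ Set.Icc (0:ℝ) T := ⟨hs0, hsu.trans huT⟩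
    have hu : u ∈ Set.Icc (0:ℝ) T := ⟨hs0.trans hsu, huT⟩
    have mcs := hmc s hs
    have mcu := hmc u hu
    have mDs := hmD s hs
    have mDu := hmD u hu
    have bcs := fun ω => hc01 s hs ω
    have bcu := fun ω => hc01 u hu ω
    have bDs := fun ω => hDb s hs ω
    have bDu := fun ω => hDb u hu ω
    -- integrability facts
    have icu : Integrable (c u) Q := hint _ 1 mcu (fun ω => by
      rw [abs_le]; constructor <;> linarith [(bcu ω).1, (bcu ω).2])
    have icuDu : Integrable (fun ω => c u ω * D u ω) Q := hint _ 1 (mcu.mul mDu) (fun ω => by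
      rw [abs_mul]
      calc |c u ω| * |D u ω| ≤ 1 * 1 := by
            refine mul_le_mul ?_ (bDu ω) (abs_nonneg _) zero_le_one
            rw [abs_le]; constructor <;> linarith [(bcu ω).1, (bcu ω).2]
        _ = 1 := one_mul 1)
    have iDscuDu : Integrable (fun ω => D s ω * (c u ω * D u ω)) Q :=
      hint _ 1 (mDs.mul (mcu.mul mDu)) (fun ω => by
        rw [abs_mul, abs_mul]
        have h1 : |c u ω| ≤ 1 := by
          rw [abs_le]; constructor <;> linarith [(bcu ω).1, (bcu ω).2]
        calc |D s ω| * (|c u ω| * |D u ω|) ≤ 1 * (1 * 1) := by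
              refine mul_le_mul (bDs ω) ?_ (by positivity) zero_le_one
              exact mul_le_mul h1 (bDu ω) (abs_nonneg _) zero_le_one
          _ = 1 := by norm_num)
    have iDs2cu : Integrable (fun ω => (D s ω)^2 * c u ω) Q :=
      hint _ 1 ((mDs.pow_const 2).mul mcu) (fun ω => by
        rw [abs_mul]
        have h1 : |c u ω| ≤ 1 := by
          rw [abs_le]; constructor <;> linarith [(bcu ω).1, (bcu ω).2]
        have h2 : |(D s ω)^2| ≤ 1 := by
          rw [abs_pow]
          calc |D s ω|^2 ≤ 1^2 := by
                exact pow_le_pow_left₀ (abs_nonneg _) (bDs ω) 2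
            _ = 1 := one_pow 2
        calc |(D s ω)^2| * |c u ω| ≤ 1 * 1 :=
              mul_le_mul h2 h1 (abs_nonneg _) zero_le_one
          _ = 1 := one_mul 1)
    have iDs2cs : Integrable (fun ω => (D s ω)^2 * c s ω) Q :=
      hint _ 1 ((mDs.pow_const 2).mul mcs) (fun ω => by
        rw [abs_mul]
        have h1 : |c s ω| ≤ 1 := by
          rw [abs_le]; constructor <;> linarith [(bcs ω).1, (bcs ω).2]
        have h2 : |(D s ω)^2| ≤ 1 := by
          rw [abs_pow]
          calc |D s ω|^2 ≤ 1^2 := pow_le_pow_left₀ (abs_nonneg _) (bDs ω) 2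
            _ = 1 := one_pow 2
        calc |(D s ω)^2| * |c s ω| ≤ 1 * 1 :=
              mul_le_mul h2 h1 (abs_nonneg _) zero_le_one
          _ = 1 := one_mul 1)
    have icuDu2 : Integrable (fun ω => c u ω * (D u ω)^2) Q :=
      hint _ 1 (mcu.mul (mDu.pow_const 2)) (fun ω => by
        rw [abs_mul]
        have h1 : |c u ω| ≤ 1 := by
          rw [abs_le]; constructor <;> linarith [(bcu ω).1, (bcu ω).2]
        have h2 : |(D u ω)^2| ≤ 1 := by
          rw [abs_pow]
          calc |D u ω|^2 ≤ 1^2 := pow_le_pow_left₀ (abs_nonneg _) (bDu ω) 2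
            _ = 1 := one_pow 2
        calc |c u ω| * |(D u ω)^2| ≤ 1 * 1 :=
              mul_le_mul h1 h2 (abs_nonneg _) zero_le_one
          _ = 1 := one_mul 1)
    have icsDs2 : Integrable (fun ω => c s ω * (D s ω)^2) Q :=
      hint _ 1 (mcs.mul (mDs.pow_const 2)) (fun ω => by
        rw [abs_mul]
        have h1 : |c s ω| ≤ 1 := by
          rw [abs_le]; constructor <;> linarith [(bcs ω).1, (bcs ω).2]
        have h2 : |(D s ω)^2| ≤ 1 := by
          rw [abs_pow]
          calc |D s ω|^2 ≤ 1^2 := pow_le_pow_left₀ (abs_nonneg _) (bDs ω) 2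
            _ = 1 := one_pow 2
        calc |c s ω| * |(D s ω)^2| ≤ 1 * 1 :=
              mul_le_mul h1 h2 (abs_nonneg _) zero_le_one
          _ = 1 := one_mul 1)
    have iDdiff2 : Integrable (fun ω => (D u ω - D s ω)^2) Q :=
      hint _ 4 ((mDu.sub mDs).pow_const 2) (fun ω => by
        rw [abs_pow]
        have h1 : |D u ω - D s ω| ≤ 2 := by
          calc |D u ω - D s ω| ≤ |D u ω| + |D s ω| := abs_sub _ _
            _ ≤ 1 + 1 := add_le_add (bDu ω) (bDs ω)
            _ = 2 := by norm_num
        calc |D u ω - D s ω|^2 ≤ 2^2 := pow_le_pow_left₀ (abs_nonneg _) h1 2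
          _ = 4 := by norm_num)
    have icuDdiff2 : Integrable (fun ω => c u ω * (D u ω - D s ω)^2) Q :=
      hint _ 4 (mcu.mul ((mDu.sub mDs).pow_const 2)) (fun ω => by
        rw [abs_mul]
        have h1 : |c u ω| ≤ 1 := by
          rw [abs_le]; constructor <;> linarith [(bcu ω).1, (bcu ω).2]
        have h2 : |(D u ω - D s ω)^2| ≤ 4 := by
          rw [abs_pow]
          have h3 : |D u ω - D s ω| ≤ 2 := by
            calc |D u ω - D s ω| ≤ |D u ω| + |D s ω| := abs_sub _ _
              _ ≤ 1 + 1 := add_le_add (bDu ω) (bDs ω)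
              _ = 2 := by norm_num
          calc |D u ω - D s ω|^2 ≤ 2^2 := pow_le_pow_left₀ (abs_nonneg _) h3 2
            _ = 4 := by norm_num
        calc |c u ω| * |(D u ω - D s ω)^2| ≤ 1 * 4 :=
              mul_le_mul h1 h2 (abs_nonneg _) zero_le_one
          _ = 4 := one_mul 4)
    -- (a) the martingale orthogonality identity
    have hsmDs : StronglyMeasurable[F s] (D s) :=
      ((hG₁_adapted s hs).sub (hG₂_adapted s hs)).stronglyMeasurable
    have hA : ∫ ω, D s ω * (c u ω * D u ω) ∂Q = ∫ ω, D s ω * (c s ω * D s ω) ∂Q := by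
      have h1 := pull s hs (D s) (fun ω => c u ω * D u ω) hsmDs iDscuDu icuDu
      rw [h1]
      refine integral_congr_ae ?_
      filter_upwards [hmart s u hs0 hsu huT] with ω e
      rw [e]
    -- (b) the submartingale inequality against D s ^ 2
    have hsmDs2 : StronglyMeasurable[F s] (fun ω => (D s ω)^2) := by
      have : Measurable[F s] (fun ω => (D s ω)^2) :=
        (((hG₁_adapted s hs).sub (hG₂_adapted s hs)).pow_const 2)
      exact this.stronglyMeasurable
    have hB : ∫ ω, (D s ω)^2 * c s ω ∂Q ≤ ∫ ω, (D s ω)^2 * c u ω ∂Q := by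
      have h1 := pull s hs (fun ω => (D s ω)^2) (c u) hsmDs2 iDs2cu icu
      rw [h1]
      have hI2 : Integrable (fun ω => (D s ω)^2 * (Q[c u | F s]) ω) Q := by
        refine Integrable.bdd_mul (c := 1) integrable_condExp ?_ (Filter.Eventually.of_forall fun ω => ?_)
        · exact ((mDs.pow_const 2)).aestronglyMeasurable
        · rw [Real.norm_eq_abs, abs_pow]
          calc |D s ω|^2 ≤ 1^2 := pow_le_pow_left₀ (abs_nonneg _) (bDs ω) 2
            _ = 1 := one_pow 2
      refine integral_mono_ae iDs2cs hI2 ?_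
      filter_upwards [hsubm s u hs0 hsu huT] with ω e
      exact mul_le_mul_of_nonneg_left e (sq_nonneg _)
    -- expansion of the squared increment
    have hexp : ∫ ω, c u ω * (D u ω - D s ω)^2 ∂Q
        = ∫ ω, c u ω * (D u ω)^2 ∂Q - 2 * ∫ ω, D s ω * (c u ω * D u ω) ∂Q
          + ∫ ω, (D s ω)^2 * c u ω ∂Q := by
      have e1 : ∀ ω, c u ω * (D u ω - D s ω)^2
          = c u ω * (D u ω)^2 - 2 * (D s ω * (c u ω * D u ω)) + (D s ω)^2 * c u ω := by
        intro ω; ring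
      calc ∫ ω, c u ω * (D u ω - D s ω)^2 ∂Q
          = ∫ ω, (c u ω * (D u ω)^2 - 2 * (D s ω * (c u ω * D u ω)) + (D s ω)^2 * c u ω) ∂Q := by
            exact integral_congr_ae (Filter.Eventually.of_forall fun ω => e1 ω)
        _ = ∫ ω, (c u ω * (D u ω)^2 - 2 * (D s ω * (c u ω * D u ω))) ∂Q
              + ∫ ω, (D s ω)^2 * c u ω ∂Q :=
            integral_add (icuDu2.sub (iDscuDu.const_mul 2)) iDs2cu
        _ = ∫ ω, c u ω * (D u ω)^2 ∂Q - ∫ ω, 2 * (D s ω * (c u ω * D u ω)) ∂Q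
              + ∫ ω, (D s ω)^2 * c u ω ∂Q := by
            rw [integral_sub icuDu2 (iDscuDu.const_mul 2)]
        _ = ∫ ω, c u ω * (D u ω)^2 ∂Q - 2 * ∫ ω, D s ω * (c u ω * D u ω) ∂Q
              + ∫ ω, (D s ω)^2 * c u ω ∂Q := by
            rw [integral_const_mul]
    have hcomm : ∫ ω, D s ω * (c s ω * D s ω) ∂Q = ∫ ω, c s ω * (D s ω)^2 ∂Q :=
      integral_congr_ae (Filter.Eventually.of_forall fun ω => by ring)
    have hcomm2 : ∫ ω, (D s ω)^2 * c s ω ∂Q = ∫ ω, c s ω * (D s ω)^2 ∂Q :=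
      integral_congr_ae (Filter.Eventually.of_forall fun ω => by ring)
    have hle1 : ∫ ω, c u ω * (D u ω - D s ω)^2 ∂Q ≤ ∫ ω, (D u ω - D s ω)^2 ∂Q := by
      refine integral_mono icuDdiff2 iDdiff2 fun ω => ?_
      exact mul_le_of_le_one_left (sq_nonneg _) (bcu ω).2
    rw [hA, hcomm] at hexp
    linarith [hexp, hB, hcomm2, hle1]
  -- the per-time conclusion
  have perT : ∀ t, 0 < t → t ≤ T → ∀ᵐ ω ∂Q, G₁ t ω = G₂ t ω := by
    intro t ht0 htT
    have htI : t ∈ Set.Icc (0:ℝ) T := ⟨ht0.le, htT⟩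
    -- partition points
    set p : ℕ → ℕ → ℝ := fun n k => (k : ℝ) * t / n with hpdef
    have hp0 : ∀ n, p n 0 = 0 := by intro n; simp [hpdef]
    have hpn : ∀ n : ℕ, 0 < n → p n n = t := by
      intro n hn
      have : (n:ℝ) ≠ 0 := Nat.cast_ne_zero.mpr hn.ne'
      simp only [hpdef]
      field_simp
    have hpmono : ∀ n k : ℕ, p n k ≤ p n (k+1) := by
      intro n k
      rcases Nat.eq_zero_or_pos n with h | h
      · simp [hpdef, h]
      · have hn : (0:ℝ) < n := Nat.cast_pos.mpr h
        simp only [hpdef]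
        exact (div_le_div_iff_of_pos_right hn).mpr (by push_cast; nlinarith)
    have hpmem : ∀ n k : ℕ, 0 < n → k ≤ n → p n k ∈ Set.Icc (0:ℝ) T := by
      intro n k hn hk
      have hn' : (0:ℝ) < n := Nat.cast_pos.mpr hn
      constructor
      · simp only [hpdef]
        positivity
      · have hk' : (k:ℝ) ≤ n := Nat.cast_le.mpr hk
        have : p n k ≤ t := by
          simp only [hpdef]
          rw [div_le_iff₀ hn']
          nlinarith
        linarith
    -- the telescoped inequality
    have tele : ∀ n : ℕ, 0 < n → ∀ m, m ≤ n →
        ∫ ω, c (p n m) ω * (D (p n m) ω)^2 ∂Q ≤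
          ∑ k ∈ Finset.range m, ∫ ω, (D (p n (k+1)) ω - D (p n k) ω)^2 ∂Q := by
      intro n hn m
      induction m with
      | zero =>
        intro _
        simp only [hp0, Finset.range_zero, Finset.sum_empty]
        have : ∀ ω, c 0 ω * (D 0 ω)^2 = 0 := by
          intro ω; simp [hDdef, hG₁_one ω, hG₂_one ω]
        rw [integral_congr_ae (Filter.Eventually.of_forall this)]
        simp
      | succ m ih =>
        intro hm
        have hm' : m ≤ n := Nat.le_of_succ_le hm
        have h1 := ih hm'
        have hs0 : 0 ≤ p n m := (hpmem n m hn hm').1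
        have hsu : p n m ≤ p n (m+1) := hpmono n m
        have huT : p n (m+1) ≤ T := (hpmem n (m+1) hn hm).2
        have h2 := key (p n m) (p n (m+1)) hs0 hsu huT
        calc ∫ ω, c (p n (m+1)) ω * (D (p n (m+1)) ω)^2 ∂Q
            ≤ ∫ ω, c (p n m) ω * (D (p n m) ω)^2 ∂Q
              + ∫ ω, (D (p n (m+1)) ω - D (p n m) ω)^2 ∂Q := h2
          _ ≤ (∑ k ∈ Finset.range m, ∫ ω, (D (p n (k+1)) ω - D (p n k) ω)^2 ∂Q)
              + ∫ ω, (D (p n (m+1)) ω - D (p n m) ω)^2 ∂Q := add_le_add_left h1 _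
          _ = ∑ k ∈ Finset.range (m+1), ∫ ω, (D (p n (k+1)) ω - D (p n k) ω)^2 ∂Q :=
              (Finset.sum_range_succ _ m).symm
    -- the Riemann sums
    set B : ℕ → Ω → ℝ :=
      fun n ω => ∑ k ∈ Finset.range (n+1), (D (p (n+1) (k+1)) ω - D (p (n+1) k) ω)^2 with hBdef
    have hmem1 : ∀ n k : ℕ, k ≤ n + 1 → p (n+1) k ∈ Set.Icc (0:ℝ) T :=
      fun n k hk => hpmem (n+1) k (Nat.succ_pos n) hk
    -- general estimate on B
    have hB_est : ∀ (n : ℕ) (ω : Ω) (ε : ℝ),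
        (∀ k, k < n+1 → |D (p (n+1) (k+1)) ω - D (p (n+1) k) ω| ≤ ε) →
        B n ω ≤ ε * 2 := by
      intro n ω ε hk
      have hε0 : 0 ≤ ε := le_trans (abs_nonneg _) (hk 0 (Nat.succ_pos n))
      have step : ∀ k ∈ Finset.range (n+1),
          (D (p (n+1) (k+1)) ω - D (p (n+1) k) ω)^2
            ≤ ε * ((G₁ (p (n+1) k) ω - G₁ (p (n+1) (k+1)) ω)
                 + (G₂ (p (n+1) k) ω - G₂ (p (n+1) (k+1)) ω)) := by
        intro k hkr
        rw [Finset.mem_range] at hkr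
        have hk1 : k ≤ n + 1 := Nat.le_of_lt_succ (Nat.lt_succ_of_lt hkr)
        have hk2 : k + 1 ≤ n + 1 := Nat.succ_le_of_lt hkr
        have hmk := hmem1 n k hk1
        have hmk1 := hmem1 n (k+1) hk2
        have ha : 0 ≤ G₁ (p (n+1) k) ω - G₁ (p (n+1) (k+1)) ω :=
          sub_nonneg.mpr (hG₁_anti ω hmk hmk1 (hpmono (n+1) k))
        have hb : 0 ≤ G₂ (p (n+1) k) ω - G₂ (p (n+1) (k+1)) ω :=
          sub_nonneg.mpr (hG₂_anti ω hmk hmk1 (hpmono (n+1) k))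
        have habs : |D (p (n+1) (k+1)) ω - D (p (n+1) k) ω|
            ≤ (G₁ (p (n+1) k) ω - G₁ (p (n+1) (k+1)) ω)
              + (G₂ (p (n+1) k) ω - G₂ (p (n+1) (k+1)) ω) := by
          rw [abs_le]
          constructor <;> simp only [hDdef] <;> linarith
        calc (D (p (n+1) (k+1)) ω - D (p (n+1) k) ω)^2
            = |D (p (n+1) (k+1)) ω - D (p (n+1) k) ω| * |D (p (n+1) (k+1)) ω - D (p (n+1) k) ω| := by
              rw [sq, ← abs_mul_abs_self]
          _ ≤ ε * ((G₁ (p (n+1) k) ω - G₁ (p (n+1) (k+1)) ω)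
                 + (G₂ (p (n+1) k) ω - G₂ (p (n+1) (k+1)) ω)) :=
              mul_le_mul (hk k hkr) habs (abs_nonneg _) hε0
      have hsum : B n ω ≤ ∑ k ∈ Finset.range (n+1),
          ε * ((G₁ (p (n+1) k) ω - G₁ (p (n+1) (k+1)) ω)
             + (G₂ (p (n+1) k) ω - G₂ (p (n+1) (k+1)) ω)) :=
        Finset.sum_le_sum step
      have htel : ∑ k ∈ Finset.range (n+1),
          ε * ((G₁ (p (n+1) k) ω - G₁ (p (n+1) (k+1)) ω)
             + (G₂ (p (n+1) k) ω - G₂ (p (n+1) (k+1)) ω))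
          = ε * ((G₁ 0 ω - G₁ t ω) + (G₂ 0 ω - G₂ t ω)) := by
        rw [← Finset.mul_sum, Finset.sum_add_distrib,
          Finset.sum_range_sub' (fun k => G₁ (p (n+1) k) ω),
          Finset.sum_range_sub' (fun k => G₂ (p (n+1) k) ω),
          hp0, hpn (n+1) (Nat.succ_pos n)]
      rw [htel] at hsum
      refine hsum.trans ?_
      have h1 := hG₁_pos t htI ω
      have h2 := hG₂_pos t htI ω
      rw [hG₁_one ω, hG₂_one ω]
      nlinarith
    have hBnonneg : ∀ n ω, 0 ≤ B n ω :=
      fun n ω => Finset.sum_nonneg fun k _ => sq_nonneg _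
    -- uniform bound
    have hBbdd : ∀ n ω, B n ω ≤ 4 := by
      intro n ω
      have := hB_est n ω 2 (fun k hk => by
        have hk1 : k ≤ n + 1 := Nat.le_of_lt_succ (Nat.lt_succ_of_lt hk)
        have hk2 : k + 1 ≤ n + 1 := Nat.succ_le_of_lt hk
        calc |D (p (n+1) (k+1)) ω - D (p (n+1) k) ω|
            ≤ |D (p (n+1) (k+1)) ω| + |D (p (n+1) k) ω| := abs_sub _ _
          _ ≤ 1 + 1 := add_le_add (hDb _ (hmem1 n (k+1) hk2) ω) (hDb _ (hmem1 n k hk1) ω)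
          _ = 2 := by norm_num)
      linarith
    -- pointwise convergence to 0
    have hBlim : ∀ ω, Filter.Tendsto (fun n => B n ω) Filter.atTop (nhds 0) := by
      intro ω
      rw [Metric.tendsto_atTop]
      intro ε hε
      have hDcont : ContinuousOn (fun r => D r ω) (Set.Icc (0:ℝ) T) :=
        (hG₁_cont ω).sub (hG₂_cont ω)
      have hUC : UniformContinuousOn (fun r => D r ω) (Set.Icc (0:ℝ) T) :=
        isCompact_Icc.uniformContinuousOn_of_continuous hDcont
      obtain ⟨δ, hδ0, hδ⟩ := Metric.uniformContinuousOn_iff.1 hUC (ε/4) (by linarith)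
      obtain ⟨N, hN⟩ := exists_nat_gt (t / δ)
      refine ⟨N, fun n hn => ?_⟩
      have hn1 : (t:ℝ) / (n+1) < δ := by
        have h1 : (t:ℝ)/δ < N := hN
        have h2 : (N:ℝ) ≤ n + 1 := by
          have : (N:ℝ) ≤ n := Nat.cast_le.mpr hn
          linarith
        rw [div_lt_iff₀ (by positivity : (0:ℝ) < (n:ℝ)+1)]
        rw [div_lt_iff₀ hδ0] at h1
        nlinarith
      have hstep : ∀ k, k < n+1 → |D (p (n+1) (k+1)) ω - D (p (n+1) k) ω| ≤ ε/4 := by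
        intro k hk
        have hk1 : k ≤ n + 1 := Nat.le_of_lt_succ (Nat.lt_succ_of_lt hk)
        have hk2 : k + 1 ≤ n + 1 := Nat.succ_le_of_lt hk
        have hdist : dist (p (n+1) (k+1)) (p (n+1) k) < δ := by
          rw [Real.dist_eq]
          have : p (n+1) (k+1) - p (n+1) k = t / (n+1) := by
            simp only [hpdef]
            push_cast
            field_simp
            ring
          rw [this, abs_of_nonneg (by positivity)]
          exact_mod_cast hn1
        have := hδ _ (hmem1 n (k+1) hk2) _ (hmem1 n k hk1) hdist
        rw [Real.dist_eq] at this
        exact this.le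
      have hBn := hB_est n ω (ε/4) hstep
      rw [Real.dist_eq, sub_zero, abs_of_nonneg (hBnonneg n ω)]
      linarith
    -- measurability, integrability of B and the partial sums
    have hDdiffint : ∀ n k : ℕ, k < n + 1 →
        Integrable (fun ω => (D (p (n+1) (k+1)) ω - D (p (n+1) k) ω)^2) Q := by
      intro n k hk
      have hk1 : k ≤ n + 1 := Nat.le_of_lt_succ (Nat.lt_succ_of_lt hk)
      have hk2 : k + 1 ≤ n + 1 := Nat.succ_le_of_lt hk
      refine hint _ 4 (((hmD _ (hmem1 n (k+1) hk2)).sub (hmD _ (hmem1 n k hk1))).pow_const 2)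
        (fun ω => ?_)
      rw [abs_pow]
      have h3 : |D (p (n+1) (k+1)) ω - D (p (n+1) k) ω| ≤ 2 := by
        calc |D (p (n+1) (k+1)) ω - D (p (n+1) k) ω|
            ≤ |D (p (n+1) (k+1)) ω| + |D (p (n+1) k) ω| := abs_sub _ _
          _ ≤ 1 + 1 := add_le_add (hDb _ (hmem1 n (k+1) hk2) ω) (hDb _ (hmem1 n k hk1) ω)
          _ = 2 := by norm_num
      calc |D (p (n+1) (k+1)) ω - D (p (n+1) k) ω|^2 ≤ 2^2 :=
            pow_le_pow_left₀ (abs_nonneg _) h3 2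
        _ = 4 := by norm_num
    have hBmeas : ∀ n, Measurable (B n) := by
      intro n
      apply Finset.measurable_sum
      intro k hk
      rw [Finset.mem_range] at hk
      have hk1 : k ≤ n + 1 := Nat.le_of_lt_succ (Nat.lt_succ_of_lt hk)
      have hk2 : k + 1 ≤ n + 1 := Nat.succ_le_of_lt hk
      exact ((hmD _ (hmem1 n (k+1) hk2)).sub (hmD _ (hmem1 n k hk1))).pow_const 2
    -- convergence of integrals
    have hlim : Filter.Tendsto (fun n => ∫ ω, B n ω ∂Q) Filter.atTop (nhds 0) := by
      have h0 : (0:ℝ) = ∫ (_ : Ω), (0:ℝ) ∂Q := by simp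
      rw [h0]
      refine tendsto_integral_of_dominated_convergence (fun _ => (4:ℝ))
        (fun n => (hBmeas n).aestronglyMeasurable) (integrable_const 4)
        (fun n => Filter.Eventually.of_forall fun ω => ?_)
        (Filter.Eventually.of_forall fun ω => hBlim ω)
      rw [Real.norm_eq_abs, abs_of_nonneg (hBnonneg n ω)]
      exact hBbdd n ω
    -- conclude ∫ c t * D t ^ 2 = 0
    have hmain : ∫ ω, c t ω * (D t ω)^2 ∂Q ≤ 0 := by
      refine ge_of_tendsto hlim (Filter.Eventually.of_forall fun n => ?_)
      have h1 := tele (n+1) (Nat.succ_pos n) (n+1) le_rfl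
      rw [hpn (n+1) (Nat.succ_pos n)] at h1
      have h2 : ∫ ω, B n ω ∂Q
          = ∑ k ∈ Finset.range (n+1), ∫ ω, (D (p (n+1) (k+1)) ω - D (p (n+1) k) ω)^2 ∂Q := by
        simp only [hBdef]
        exact integral_finset_sum _ (fun k hk => hDdiffint n k (Finset.mem_range.mp hk))
      rw [h2]
      exact h1
    have hnonneg : ∀ ω, 0 ≤ c t ω * (D t ω)^2 :=
      fun ω => mul_nonneg (hc01 t htI ω).1.le (sq_nonneg _)
    have hintct : Integrable (fun ω => c t ω * (D t ω)^2) Q := by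
      refine hint _ 1 ((hmc t htI).mul ((hmD t htI).pow_const 2)) (fun ω => ?_)
      rw [abs_mul]
      have h1 : |c t ω| ≤ 1 := by
        rw [abs_le]; constructor <;> linarith [(hc01 t htI ω).1, (hc01 t htI ω).2]
      have h2 : |(D t ω)^2| ≤ 1 := by
        rw [abs_pow]
        calc |D t ω|^2 ≤ 1^2 := pow_le_pow_left₀ (abs_nonneg _) (hDb t htI ω) 2
          _ = 1 := one_pow 2
      calc |c t ω| * |(D t ω)^2| ≤ 1 * 1 := mul_le_mul h1 h2 (abs_nonneg _) zero_le_one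
        _ = 1 := one_mul 1
    have hzero : ∫ ω, c t ω * (D t ω)^2 ∂Q = 0 :=
      le_antisymm hmain (integral_nonneg hnonneg)
    have hae : ∀ᵐ ω ∂Q, c t ω * (D t ω)^2 = 0 := by
      have := (integral_eq_zero_iff_of_nonneg_ae
        (Filter.Eventually.of_forall hnonneg) hintct).mp hzero
      filter_upwards [this] with ω e
      exact e
    filter_upwards [hae] with ω e
    have hc := (hc01 t htI ω).1
    have h2 : (D t ω)^2 = 0 := by
      rcases mul_eq_zero.mp e with h | h
      · exact absurd h hc.ne'
      · exact h
    have h3 : D t ω = 0 := pow_eq_zero_iff (two_ne_zero) |>.mp h2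
    simpa [hDdef, sub_eq_zero] using h3
  -- assemble over a countable dense set of times
  have hQae : ∀ᵐ ω ∂Q, (∀ q : ℚ, (q:ℝ) ∈ Set.Icc (0:ℝ) T → G₁ q ω = G₂ q ω)
      ∧ G₁ T ω = G₂ T ω := by
    refine Filter.Eventually.and ?_ (perT T hT le_rfl)
    rw [MeasureTheory.ae_all_iff]
    intro q
    by_cases hq : (q:ℝ) ∈ Set.Icc (0:ℝ) T
    · rcases eq_or_lt_of_le hq.1 with h | h
      · exact Filter.Eventually.of_forall fun ω _ => by
          rw [← h, hG₁_one ω, hG₂_one ω]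
      · exact (perT q h hq.2).mono fun ω hω _ => hω
    · exact Filter.Eventually.of_forall fun ω hq' => absurd hq' hq
  filter_upwards [hQae] with ω hω
  intro t ht
  rcases eq_or_lt_of_le ht.2 with hteq | htlt
  · rw [hteq]; exact hω.2
  rcases eq_or_lt_of_le ht.1 with h0eq | h0lt
  · rw [← h0eq, hG₁_one ω, hG₂_one ω]
  -- t ∈ (0, T): approximate by rationals from the right
  have hq : ∀ n : ℕ, ∃ r : ℚ, t < (r:ℝ) ∧ (r:ℝ) < min T (t + 1/(n+1)) := by
    intro n
    apply exists_rat_btwn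
    apply lt_min htlt
    have : (0:ℝ) < 1/(n+1) := by positivity
    linarith
  choose q hq1 hq2 using hq
  have hqmem : ∀ n, ((q n : ℝ)) ∈ Set.Icc (0:ℝ) T :=
    fun n => ⟨le_trans ht.1 (hq1 n).le, ((hq2 n).trans_le (min_le_left _ _)).le⟩
  have hqlim : Filter.Tendsto (fun n => ((q n : ℝ))) Filter.atTop (nhds t) := by
    have hupper : ∀ n : ℕ, ((q n : ℝ)) ≤ t + 1/(n+1) :=
      fun n => ((hq2 n).trans_le (min_le_right _ _)).le
    have hlower : ∀ n : ℕ, t ≤ ((q n : ℝ)) := fun n => (hq1 n).le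
    have h1 : Filter.Tendsto (fun n : ℕ => t + 1/((n:ℝ)+1)) Filter.atTop (nhds (t + 0)) :=
      ((tendsto_const_nhds).add tendsto_one_div_add_atTop_nhds_zero_nat)
    rw [add_zero] at h1
    exact tendsto_of_tendsto_of_tendsto_of_le_of_le tendsto_const_nhds h1 hlower hupper
  have hqlim' : Filter.Tendsto (fun n => ((q n : ℝ))) Filter.atTop (nhdsWithin t (Set.Icc (0:ℝ) T)) := by
    refine tendsto_nhdsWithin_of_tendsto_nhds_of_eventually_within _ hqlim ?_
    exact Filter.Eventually.of_forall hqmem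
  have hlim1 : Filter.Tendsto (fun n => G₁ ((q n : ℝ)) ω) Filter.atTop (nhds (G₁ t ω)) :=
    ((hG₁_cont ω t ht).tendsto).comp hqlim'
  have hlim2 : Filter.Tendsto (fun n => G₂ ((q n : ℝ)) ω) Filter.atTop (nhds (G₂ t ω)) :=
    ((hG₂_cont ω t ht).tendsto).comp hqlim'
  have heqn : (fun n => G₁ ((q n : ℝ)) ω) = fun n => G₂ ((q n : ℝ)) ω :=
    funext fun n => hω.1 (q n) (hqmem n)
  rw [heqn] at hlim1
  exact tendsto_nhds_unique hlim1 hlim2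
end
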